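/- arXiv:2207.05308 — 2 statements merged into one kernel-verified Lean document; each statement's English description precedes it below -/
import Mathlib

section
/- Let T: v₁ → ⋯ → vₙ → v₁ be a cyclic tour on distinct reals. Then the number of conflicting pairs in T is at least half the number of turning points in T, i.e., |cf(T)| ≥ |tp(T)|/2. Here a pair (vᵢ, vⱼ) is conflicting if vᵢ ≤ v_{j+1} < v_{i+1} ≤ vⱼ (indices cyclic). -/
/-- `i` is a turning point of the cyclic tour `v` (a strict local extremum). -/
def turning (v : ℤ → ℝ) (i : ℤ) : Prop :=
  ¬(v (i - 1) < v i ∧ v i < v (i + 1)) ∧ ¬(v (i + 1) < v i ∧ v i < v (i - 1))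

/-- The pair `(i, j)` is conflicting in the cyclic tour `v`:
`vᵢ ≤ v_{j+1} < v_{i+1} ≤ vⱼ`. -/
def conflicting (v : ℤ → ℝ) (i j : ℤ) : Prop :=
  v i ≤ v (j + 1) ∧ v (j + 1) < v (i + 1) ∧ v (i + 1) ≤ v j

open Finset

open scoped Classical in
noncomputable def Mf (V : Finset ℝ) (s : ℝ → ℝ) : Finset ℝ :=
  V.filter fun x => x < s x ∧ s (s x) < s x

open scoped Classical in
noncomputable def Cf (V : Finset ℝ) (s : ℝ → ℝ) : Finset (ℝ × ℝ) :=
  (V ×ˢ V).filter fun p => p.1 ≤ s p.2 ∧ s p.2 < s p.1 ∧ s p.1 ≤ p.2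

lemma mem_Mf {V : Finset ℝ} {s : ℝ → ℝ} {x : ℝ} :
    x ∈ Mf V s ↔ x ∈ V ∧ x < s x ∧ s (s x) < s x := by
  classical
  simp [Mf]

lemma mem_Cf {V : Finset ℝ} {s : ℝ → ℝ} {p : ℝ × ℝ} :
    p ∈ Cf V s ↔ p.1 ∈ V ∧ p.2 ∈ V ∧ p.1 ≤ s p.2 ∧ s p.2 < s p.1 ∧ s p.1 ≤ p.2 := by
  classical
  simp [Cf, Finset.mem_product, and_assoc]

lemma main_ineq : ∀ (N : ℕ) (V : Finset ℝ) (s : ℝ → ℝ), V.card ≤ N →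
    (∀ x ∈ V, s x ∈ V) →
    (∀ x ∈ V, ∀ y ∈ V, s x = s y → x = y) →
    (∀ y ∈ V, ∃ x ∈ V, s x = y) →
    (Mf V s).card ≤ (Cf V s).card := by
  intro N
  induction N with
  | zero =>
    intro V s hc _ _ _
    have h1 : (Mf V s).card ≤ V.card := Finset.card_filter_le _ _
    omega
  | succ N ih =>
    intro V s hc hm hinj hsur
    by_cases hM0 : (Mf V s).Nonempty
    swap
    · rw [Finset.not_nonempty_iff_eq_empty] at hM0
      simp [hM0]
    by_cases hfix : ∃ z ∈ V, s z = z
    · obtain ⟨z, hzV, hzz⟩ := hfix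
      set V' := V.erase z with hV'
      have hsub : V' ⊆ V := Finset.erase_subset _ _
      have hcard' : V'.card ≤ N := by
        have := Finset.card_erase_add_one hzV
        rw [← hV'] at this
        omega
      have hm' : ∀ x ∈ V', s x ∈ V' := by
        intro x hx
        obtain ⟨hxz, hxV⟩ := Finset.mem_erase.mp hx
        refine Finset.mem_erase.mpr ⟨?_, hm x hxV⟩
        intro h
        exact hxz (hinj x hxV z hzV (by rw [h, hzz]))
      have hinj' : ∀ x ∈ V', ∀ y ∈ V', s x = s y → x = y := fun x hx y hy h =>
        hinj x (hsub hx) y (hsub hy) h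
      have hsur' : ∀ y ∈ V', ∃ x ∈ V', s x = y := by
        intro y hy
        obtain ⟨hyz, hyV⟩ := Finset.mem_erase.mp hy
        obtain ⟨x, hxV, hxy⟩ := hsur y hyV
        refine ⟨x, Finset.mem_erase.mpr ⟨?_, hxV⟩, hxy⟩
        rintro rfl; exact hyz (by rw [← hxy, hzz])
      have hMle : (Mf V s).card ≤ (Mf V' s).card := by
        apply Finset.card_le_card
        intro x hx
        obtain ⟨hxV, h1, h2⟩ := mem_Mf.mp hx
        refine mem_Mf.mpr ⟨Finset.mem_erase.mpr ⟨?_, hxV⟩, h1, h2⟩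
        rintro rfl; rw [hzz] at h1; exact lt_irrefl _ h1
      have hCle : (Cf V' s).card ≤ (Cf V s).card := by
        apply Finset.card_le_card
        intro p hp
        obtain ⟨h1, h2, h3⟩ := mem_Cf.mp hp
        exact mem_Cf.mpr ⟨hsub h1, hsub h2, h3⟩
      calc (Mf V s).card ≤ (Mf V' s).card := hMle
        _ ≤ (Cf V' s).card := ih V' s hcard' hm' hinj' hsur'
        _ ≤ (Cf V s).card := hCle
    by_cases hreg : ∃ p ∈ V, (p < s p ∧ s p < s (s p)) ∨ (s (s p) < s p ∧ s p < p)
    · obtain ⟨p, hpV, hcase⟩ := hreg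
      rcases hcase with ⟨h1, h2⟩ | ⟨h2, h1⟩
      ·
        classical
        set r := s p with hr
        have hrV : r ∈ V := hm p hpV
        have hsrV : s r ∈ V := hm r hrV
        set s' := fun x => if x = p then s r else s x with hs'
        set V' := V.erase r with hV'
        have hs'p : s' p = s r := by simp [hs']
        have hs'x : ∀ x, x ≠ p → s' x = s x := by intro x hx; simp [hs', hx]
        have hpr : p ≠ r := ne_of_lt h1
        have hpV' : p ∈ V' := Finset.mem_erase.mpr ⟨hpr, hpV⟩
        have hcard' : V'.card ≤ N := by
          have := Finset.card_erase_add_one hrV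
          rw [← hV'] at this
          omega
        have hprer : ∀ x ∈ V, s x = r → x = p := fun x hx h => hinj x hx p hpV (h.trans hr)
        have hm' : ∀ x ∈ V', s' x ∈ V' := by
          intro x hx
          obtain ⟨hxr, hxV⟩ := Finset.mem_erase.mp hx
          by_cases hxp : x = p
          · subst hxp
            rw [hs'p]
            exact Finset.mem_erase.mpr ⟨by intro h; rw [h] at h2; linarith, hsrV⟩
          · rw [hs'x x hxp]
            refine Finset.mem_erase.mpr ⟨?_, hm x hxV⟩
            intro h; exact hxp (hprer x hxV h)
        have hinj' : ∀ x ∈ V', ∀ y ∈ V', s' x = s' y → x = y := by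
          intro x hx y hy h
          obtain ⟨hxr, hxV⟩ := Finset.mem_erase.mp hx
          obtain ⟨hyr, hyV⟩ := Finset.mem_erase.mp hy
          by_cases hxp : x = p <;> by_cases hyp : y = p
          · rw [hxp, hyp]
          · rw [hxp, hs'p] at h; rw [hs'x y hyp] at h
            exact absurd (hinj r hrV y hyV h).symm hyr
          · rw [hyp, hs'p] at h; rw [hs'x x hxp] at h
            exact absurd (hinj x hxV r hrV h) hxr
          · rw [hs'x x hxp, hs'x y hyp] at h
            exact hinj x hxV y hyV h
        have hsur' : ∀ y ∈ V', ∃ x ∈ V', s' x = y := by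
          intro y hy
          obtain ⟨hyr, hyV⟩ := Finset.mem_erase.mp hy
          obtain ⟨x, hxV, hxy⟩ := hsur y hyV
          by_cases hxr : x = r
          · exact ⟨p, hpV', by rw [hs'p, ← hxr, hxy]⟩
          · have hxp : x ≠ p := by rintro rfl; exact hyr (hxy ▸ hr.symm ▸ rfl)
            exact ⟨x, Finset.mem_erase.mpr ⟨hxr, hxV⟩, by rw [hs'x x hxp, hxy]⟩
        have hpnotM : p ∉ Mf V s := by
          intro h
          obtain ⟨-, -, h3⟩ := mem_Mf.mp h
          rw [← hr] at h3; linarith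
        -- M side
        have hMle : (Mf V s).card ≤ (Mf V' s').card := by
          set ψ : ℝ → ℝ := fun x => if x = r then p else x with hψ
          have hψr : ψ r = p := by simp [hψ]
          have hψx : ∀ x, x ≠ r → ψ x = x := by intro x hx; simp [hψ, hx]
          apply Finset.card_le_card_of_injOn ψ
          · intro x hx
            obtain ⟨hxV, hx1, hx2⟩ := mem_Mf.mp hx
            by_cases hxr : x = r
            · subst hxr
              rw [hψr]
              refine mem_Mf.mpr ⟨hpV', ?_, ?_⟩
              · rw [hs'p]; linarith
              · rw [hs'p, hs'x (s r) (by intro h; rw [h] at hx1; linarith)]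
                exact hx2
            · rw [hψx x hxr]
              have hxp : x ≠ p := by intro h; rw [h] at hx; exact hpnotM hx
              have hsxp : s x ≠ p := by
                intro h
                rw [h, ← hr] at hx2
                linarith
              refine mem_Mf.mpr ⟨Finset.mem_erase.mpr ⟨hxr, hxV⟩, ?_, ?_⟩
              · rw [hs'x x hxp]; exact hx1
              · rw [hs'x x hxp, hs'x (s x) hsxp]; exact hx2
          · intro x hx y hy h
            simp only [Finset.mem_coe] at hx hy
            by_cases hxr : x = r <;> by_cases hyr : y = r
            · rw [hxr, hyr]
            · rw [hxr, hψr, hψx y hyr] at h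
              exact absurd (h ▸ hy) hpnotM
            · rw [hyr, hψr, hψx x hxr] at h
              exact absurd (h.symm ▸ hx) hpnotM
            · rwa [hψx x hxr, hψx y hyr] at h
        -- C side
        have hCle : (Cf V' s').card ≤ (Cf V s).card := by
          set φ : ℝ × ℝ → ℝ × ℝ := fun q => if q.1 = p ∧ r ≤ s q.2 then (r, q.2) else q with hφ
          have hφpos : ∀ x y : ℝ, (x = p ∧ r ≤ s y) → φ (x, y) = (r, y) := by
            intro x y h; simp only [hφ, if_pos h]
          have hφneg : ∀ x y : ℝ, ¬(x = p ∧ r ≤ s y) → φ (x, y) = (x, y) := by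
            intro x y h; simp only [hφ, if_neg h]
          apply Finset.card_le_card_of_injOn φ
          · rintro ⟨x, y⟩ hq
            obtain ⟨hxV', hyV', c1, c2, c3⟩ := mem_Cf.mp hq
            simp only at hxV' hyV' c1 c2 c3
            obtain ⟨hxr, hxV⟩ := Finset.mem_erase.mp hxV'
            obtain ⟨hyr, hyV⟩ := Finset.mem_erase.mp hyV'
            have hyp : y ≠ p := by
              intro hy
              rw [hy, hs'p] at c1
              by_cases hxp : x = p
              · rw [hxp, hy, hs'p] at c2; linarith
              · rw [hs'x x hxp] at c2 c3
                rw [hy] at c3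
                rw [hy, hs'p] at c2
                linarith
            rw [hs'x y hyp] at c1 c2
            by_cases hxp : x = p
            · subst hxp
              rw [hs'p] at c2 c3
              by_cases hrle : r ≤ s y
              · rw [hφpos x y ⟨rfl, hrle⟩]
                exact mem_Cf.mpr ⟨hrV, hyV, hrle, c2, c3⟩
              · rw [hφneg x y (by tauto)]
                push_neg at hrle
                refine mem_Cf.mpr ⟨hpV, hyV, c1, ?_, ?_⟩
                · show s y < s x; rw [← hr]; exact hrle
                · show s x ≤ y; rw [← hr]; linarith
            · rw [hφneg x y (by tauto)]
              rw [hs'x x hxp] at c2 c3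
              exact mem_Cf.mpr ⟨hxV, hyV, c1, c2, c3⟩
          · rintro ⟨x1, y1⟩ hq1 ⟨x2, y2⟩ hq2 h
            simp only [Finset.mem_coe] at hq1 hq2
            have hx1r : x1 ≠ r := by
              have := (mem_Cf.mp hq1).1
              exact (Finset.mem_erase.mp this).1
            have hx2r : x2 ≠ r := by
              have := (mem_Cf.mp hq2).1
              exact (Finset.mem_erase.mp this).1
            by_cases hb1 : x1 = p ∧ r ≤ s y1 <;> by_cases hb2 : x2 = p ∧ r ≤ s y2
            · rw [hφpos x1 y1 hb1, hφpos x2 y2 hb2] at h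
              simp only [Prod.mk.injEq] at h
              rw [hb1.1, hb2.1, h.2]
            · rw [hφpos x1 y1 hb1, hφneg x2 y2 hb2] at h
              simp only [Prod.mk.injEq] at h
              exact absurd h.1.symm hx2r
            · rw [hφneg x1 y1 hb1, hφpos x2 y2 hb2] at h
              simp only [Prod.mk.injEq] at h
              exact absurd h.1 hx1r
            · rwa [hφneg x1 y1 hb1, hφneg x2 y2 hb2] at h
        calc (Mf V s).card ≤ (Mf V' s').card := hMle
          _ ≤ (Cf V' s').card := ih V' s' hcard' hm' hinj' hsur'
          _ ≤ (Cf V s).card := hCle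
      ·
        classical
        set r := s p with hr
        have hrV : r ∈ V := hm p hpV
        have hsrV : s r ∈ V := hm r hrV
        set s' := fun x => if x = p then s r else s x with hs'
        set V' := V.erase r with hV'
        have hs'p : s' p = s r := by simp [hs']
        have hs'x : ∀ x, x ≠ p → s' x = s x := by intro x hx; simp [hs', hx]
        have hpr : p ≠ r := ne_of_gt h1
        have hpV' : p ∈ V' := Finset.mem_erase.mpr ⟨hpr, hpV⟩
        have hcard' : V'.card ≤ N := by
          have := Finset.card_erase_add_one hrV
          rw [← hV'] at this
          omega
        have hprer : ∀ x ∈ V, s x = r → x = p := fun x hx h => hinj x hx p hpV (h.trans hr)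
        have hm' : ∀ x ∈ V', s' x ∈ V' := by
          intro x hx
          obtain ⟨hxr, hxV⟩ := Finset.mem_erase.mp hx
          by_cases hxp : x = p
          · subst hxp
            rw [hs'p]
            exact Finset.mem_erase.mpr ⟨by intro h; rw [h] at h2; linarith, hsrV⟩
          · rw [hs'x x hxp]
            refine Finset.mem_erase.mpr ⟨?_, hm x hxV⟩
            intro h; exact hxp (hprer x hxV h)
        have hinj' : ∀ x ∈ V', ∀ y ∈ V', s' x = s' y → x = y := by
          intro x hx y hy h
          obtain ⟨hxr, hxV⟩ := Finset.mem_erase.mp hx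
          obtain ⟨hyr, hyV⟩ := Finset.mem_erase.mp hy
          by_cases hxp : x = p <;> by_cases hyp : y = p
          · rw [hxp, hyp]
          · rw [hxp, hs'p] at h; rw [hs'x y hyp] at h
            exact absurd (hinj r hrV y hyV h).symm hyr
          · rw [hyp, hs'p] at h; rw [hs'x x hxp] at h
            exact absurd (hinj x hxV r hrV h) hxr
          · rw [hs'x x hxp, hs'x y hyp] at h
            exact hinj x hxV y hyV h
        have hsur' : ∀ y ∈ V', ∃ x ∈ V', s' x = y := by
          intro y hy
          obtain ⟨hyr, hyV⟩ := Finset.mem_erase.mp hy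
          obtain ⟨x, hxV, hxy⟩ := hsur y hyV
          by_cases hxr : x = r
          · exact ⟨p, hpV', by rw [hs'p, ← hxr, hxy]⟩
          · have hxp : x ≠ p := by rintro rfl; exact hyr (hxy ▸ hr.symm ▸ rfl)
            exact ⟨x, Finset.mem_erase.mpr ⟨hxr, hxV⟩, by rw [hs'x x hxp, hxy]⟩
        -- M side : identity injection
        have hMle : (Mf V s).card ≤ (Mf V' s').card := by
          apply Finset.card_le_card_of_injOn (fun x => x)
          · intro x hx
            obtain ⟨hxV, hx1, hx2⟩ := mem_Mf.mp hx
            have hxr : x ≠ r := by intro h; rw [h] at hx1; linarith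
            have hxp : x ≠ p := by intro h; rw [h, ← hr] at hx1; linarith
            refine mem_Mf.mpr ⟨Finset.mem_erase.mpr ⟨hxr, hxV⟩, ?_, ?_⟩
            · rw [hs'x x hxp]; exact hx1
            · rw [hs'x x hxp]
              by_cases hsxp : s x = p
              · rw [hsxp, hs'p]
                rw [hsxp] at hx1
                linarith
              · rw [hs'x (s x) hsxp]; exact hx2
          · intro x _ y _ h; exact h
        -- C side
        have hCle : (Cf V' s').card ≤ (Cf V s).card := by
          set φ : ℝ × ℝ → ℝ × ℝ := fun q => if q.2 = p ∧ s q.1 ≤ r then (q.1, r) else q with hφ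
          have hφpos : ∀ x y : ℝ, (y = p ∧ s x ≤ r) → φ (x, y) = (x, r) := by
            intro x y h; simp only [hφ, if_pos h]
          have hφneg : ∀ x y : ℝ, ¬(y = p ∧ s x ≤ r) → φ (x, y) = (x, y) := by
            intro x y h; simp only [hφ, if_neg h]
          apply Finset.card_le_card_of_injOn φ
          · rintro ⟨x, y⟩ hq
            obtain ⟨hxV', hyV', c1, c2, c3⟩ := mem_Cf.mp hq
            simp only at hxV' hyV' c1 c2 c3
            obtain ⟨hxr, hxV⟩ := Finset.mem_erase.mp hxV'
            obtain ⟨hyr, hyV⟩ := Finset.mem_erase.mp hyV'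
            have hxp : x ≠ p := by
              intro hx
              rw [hx, hs'p] at c2 c3
              by_cases hyp : y = p
              · rw [hyp, hs'p] at c1
                rw [hx] at c1
                linarith
              · rw [hs'x y hyp] at c1 c2
                rw [hx] at c1
                linarith
            rw [hs'x x hxp] at c2 c3
            by_cases hyp : y = p
            · rw [hyp, hs'p] at c1 c2
              by_cases hsle : s x ≤ r
              · rw [hφpos x y ⟨hyp, hsle⟩]
                exact mem_Cf.mpr ⟨hxV, hrV, c1, c2, hsle⟩
              · rw [hφneg x y (fun hh => hsle hh.2)]
                push_neg at hsle
                refine mem_Cf.mpr ⟨hxV, hyV, ?_, ?_, ?_⟩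
                · show x ≤ s y
                  rw [hyp, ← hr]
                  linarith
                · show s y < s x
                  rw [hyp, ← hr]
                  exact hsle
                · show s x ≤ y
                  exact c3
            · rw [hφneg x y (by tauto)]
              rw [hs'x y hyp] at c1 c2
              exact mem_Cf.mpr ⟨hxV, hyV, c1, c2, c3⟩
          · rintro ⟨x1, y1⟩ hq1 ⟨x2, y2⟩ hq2 h
            simp only [Finset.mem_coe] at hq1 hq2
            have hy1r : y1 ≠ r := (Finset.mem_erase.mp (mem_Cf.mp hq1).2.1).1
            have hy2r : y2 ≠ r := (Finset.mem_erase.mp (mem_Cf.mp hq2).2.1).1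
            by_cases hb1 : y1 = p ∧ s x1 ≤ r <;> by_cases hb2 : y2 = p ∧ s x2 ≤ r
            · rw [hφpos x1 y1 hb1, hφpos x2 y2 hb2] at h
              simp only [Prod.mk.injEq] at h
              rw [hb1.1, hb2.1, h.1]
            · rw [hφpos x1 y1 hb1, hφneg x2 y2 hb2] at h
              simp only [Prod.mk.injEq] at h
              exact absurd h.2.symm hy2r
            · rw [hφneg x1 y1 hb1, hφpos x2 y2 hb2] at h
              simp only [Prod.mk.injEq] at h
              exact absurd h.2 hy1r
            · rwa [hφneg x1 y1 hb1, hφneg x2 y2 hb2] at h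
        calc (Mf V s).card ≤ (Mf V' s').card := hMle
          _ ≤ (Cf V' s').card := ih V' s' hcard' hm' hinj' hsur'
          _ ≤ (Cf V s).card := hCle
    push_neg at hfix
    classical
    -- dichotomy
    have hD : ∀ q ∈ V, (q < s q ∧ s (s q) < s q) ∨ (s q < q ∧ s q < s (s q)) := by
      intro q hqV
      have hA : ¬(q < s q ∧ s q < s (s q)) := fun hh => hreg ⟨q, hqV, Or.inl hh⟩
      have hB : ¬(s (s q) < s q ∧ s q < q) := fun hh => hreg ⟨q, hqV, Or.inr hh⟩
      have hne := hfix q hqV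
      rcases lt_trichotomy q (s q) with h | h | h
      case inr.inl => exact absurd h.symm hne
      · left
        refine ⟨h, ?_⟩
        rcases lt_trichotomy (s (s q)) (s q) with h' | h' | h'
        · exact h'
        · have := hinj (s q) (hm q hqV) q hqV h'
          rw [this] at h
          exact absurd h (lt_irrefl _)
        · exact absurd ⟨h, h'⟩ hA
      · right
        refine ⟨h, ?_⟩
        rcases lt_trichotomy (s q) (s (s q)) with h' | h' | h'
        · exact h'
        · have := hinj (s q) (hm q hqV) q hqV h'.symm
          rw [this] at h
          exact absurd h (lt_irrefl _)
        · exact absurd ⟨h', h⟩ hB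
    have hMaxne : ((Mf V s).image s).Nonempty := hM0.image s
    set X := ((Mf V s).image s).min' hMaxne with hX
    have hXmem : X ∈ (Mf V s).image s := Finset.min'_mem _ _
    obtain ⟨P, hPMf, hPX⟩ := Finset.mem_image.mp hXmem
    obtain ⟨hPV, hP1, hP2⟩ := mem_Mf.mp hPMf
    rw [hPX] at hP1 hP2
    set S := s X with hS
    -- hP1 : P < X ; hP2 : S < X
    have hXV : X ∈ V := by rw [← hPX]; exact hm P hPV
    have hSV : S ∈ V := hm X hXV
    have hKEY : ∀ x ∈ V, x < s x → X ≤ s x ∧ s (s x) < s x := by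
      intro x hxV hlt
      rcases hD x hxV with ⟨-, h2⟩ | ⟨h1, -⟩
      · have hxMf : x ∈ Mf V s := mem_Mf.mpr ⟨hxV, hlt, h2⟩
        have hmem : s x ∈ (Mf V s).image s := Finset.mem_image_of_mem s hxMf
        exact ⟨Finset.min'_le _ _ hmem, h2⟩
      · linarith
    have hSS : S < s S := by
      rcases hD X hXV with ⟨h1, -⟩ | ⟨-, h2⟩
      · rw [← hS] at h1; linarith
      · rw [← hS] at h2; exact h2
    have hXsS : X ≤ s S := (hKEY S hSV hSS).1
    have hssS : s (s S) < s S := (hKEY S hSV hSS).2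
    have hprerX : ∀ x ∈ V, s x = X → x = P := fun x hx h =>
      hinj x hx P hPV (h.trans hPX.symm)
    have hprerS : ∀ x ∈ V, s x = S → x = X := fun x hx h =>
      hinj x hx X hXV (by rw [h, hS])
    have hPneX : P ≠ X := ne_of_lt hP1
    have hSneX : S ≠ X := ne_of_lt hP2
    rcases lt_trichotomy P S with hPS | hPS | hPS
    -- ============ CASE P < S ============
    · have hsSX : X < s S := by
        rcases lt_or_eq_of_le hXsS with h | h
        · exact h
        · have hSP : S = P := hprerX S hSV h.symm
          exact absurd hSP.symm (ne_of_lt hPS)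
      set s' := fun x => if x = P then s S else s x with hs'
      set V' := (V.erase X).erase S with hV'
      have hmemV' : ∀ x, x ∈ V' ↔ x ≠ S ∧ x ≠ X ∧ x ∈ V := by
        intro x
        simp [hV', Finset.mem_erase, and_assoc]
      have hs'P : s' P = s S := by simp [hs']
      have hs'x : ∀ x, x ≠ P → s' x = s x := by intro x hx; simp [hs', hx]
      have hPV' : P ∈ V' := (hmemV' P).mpr ⟨ne_of_lt hPS, hPneX, hPV⟩
      have hsSV' : s S ∈ V' := (hmemV' (s S)).mpr
        ⟨ne_of_gt hSS, ne_of_gt hsSX, hm S hSV⟩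
      have hcard' : V'.card ≤ N := by
        have h1 : V'.card ≤ (V.erase X).card := by
          rw [hV']; exact Finset.card_erase_le
        have h2 := Finset.card_erase_add_one hXV
        omega
      have hm' : ∀ x ∈ V', s' x ∈ V' := by
        intro x hx
        obtain ⟨hxS, hxX, hxV⟩ := (hmemV' x).mp hx
        by_cases hxP : x = P
        · rw [hxP, hs'P]; exact hsSV'
        · rw [hs'x x hxP]
          refine (hmemV' (s x)).mpr ⟨?_, ?_, hm x hxV⟩
          · intro h; exact hxX (hprerS x hxV h)
          · intro h; exact hxP (hprerX x hxV h)
      have hinj' : ∀ x ∈ V', ∀ y ∈ V', s' x = s' y → x = y := by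
        intro x hx y hy h
        obtain ⟨hxS, hxX, hxV⟩ := (hmemV' x).mp hx
        obtain ⟨hyS, hyX, hyV⟩ := (hmemV' y).mp hy
        by_cases hxP : x = P <;> by_cases hyP : y = P
        · rw [hxP, hyP]
        · rw [hxP, hs'P, hs'x y hyP] at h
          exact absurd (hinj S hSV y hyV h).symm hyS
        · rw [hyP, hs'P, hs'x x hxP] at h
          exact absurd (hinj x hxV S hSV h) hxS
        · rw [hs'x x hxP, hs'x y hyP] at h
          exact hinj x hxV y hyV h
      have hsur' : ∀ y ∈ V', ∃ x ∈ V', s' x = y := by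
        intro y hy
        obtain ⟨hyS, hyX, hyV⟩ := (hmemV' y).mp hy
        obtain ⟨x, hxV, hxy⟩ := hsur y hyV
        by_cases hxX2 : x = X
        · exact absurd (by rw [← hxy, hxX2, ← hS]) hyS
        · by_cases hxS2 : x = S
          · exact ⟨P, hPV', by rw [hs'P, ← hxS2, hxy]⟩
          · by_cases hxP : x = P
            · exact absurd (by rw [← hxy, hxP, hPX]) hyX
            · exact ⟨x, (hmemV' x).mpr ⟨hxS2, hxX2, hxV⟩, by rw [hs'x x hxP, hxy]⟩
      -- M side
      have hSMf : S ∈ Mf V s := mem_Mf.mpr ⟨hSV, hSS, hssS⟩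
      have hMle : ((Mf V s).erase S).card ≤ (Mf V' s').card := by
        apply Finset.card_le_card_of_injOn (fun x => x)
        · intro x hx
          obtain ⟨hxS, hxMf⟩ := Finset.mem_erase.mp hx
          obtain ⟨hxV, hx1, hx2⟩ := mem_Mf.mp hxMf
          have hxX : x ≠ X := by
            intro h
            rw [h, ← hS] at hx1
            linarith
          by_cases hxP : x = P
          · rw [hxP]
            refine mem_Mf.mpr ⟨hPV', ?_, ?_⟩
            · rw [hs'P]
              linarith
            · rw [hs'P, hs'x (s S) (by intro h; rw [h] at hsSX; linarith)]
              exact hssS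
          · have hsxP : s x ≠ P := by
              intro h
              rw [h, hPX] at hx2
              linarith
            refine mem_Mf.mpr ⟨(hmemV' x).mpr ⟨hxS, hxX, hxV⟩, ?_, ?_⟩
            · rw [hs'x x hxP]; exact hx1
            · rw [hs'x x hxP, hs'x (s x) hsxP]; exact hx2
        · intro x _ y _ h; exact h
      -- C side
      have hPXC : (P, X) ∈ Cf V s := by
        refine mem_Cf.mpr ⟨hPV, hXV, ?_, ?_, ?_⟩
        · show P ≤ s X
          rw [← hS]; exact le_of_lt hPS
        · show s X < s P
          rw [← hS, hPX]; exact hP2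
        · show s P ≤ X
          rw [hPX]
      have hCle : (Cf V' s').card ≤ ((Cf V s).erase (P, X)).card := by
        set φ : ℝ × ℝ → ℝ × ℝ := fun q => if q.1 = P ∧ S ≤ s q.2 then (S, q.2) else q with hφ
        have hφpos : ∀ x y : ℝ, (x = P ∧ S ≤ s y) → φ (x, y) = (S, y) := by
          intro x y h; simp only [hφ, if_pos h]
        have hφneg : ∀ x y : ℝ, ¬(x = P ∧ S ≤ s y) → φ (x, y) = (x, y) := by
          intro x y h; simp only [hφ, if_neg h]
        apply Finset.card_le_card_of_injOn φ
        · rintro ⟨x, y⟩ hq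
          obtain ⟨hxV', hyV', c1, c2, c3⟩ := mem_Cf.mp hq
          simp only at hxV' hyV' c1 c2 c3
          obtain ⟨hxS, hxX, hxV⟩ := (hmemV' x).mp hxV'
          obtain ⟨hyS, hyX, hyV⟩ := (hmemV' y).mp hyV'
          have hyP : y ≠ P := by
            intro hy
            rw [hy, hs'P] at c2
            by_cases hxP : x = P
            · rw [hxP, hs'P] at c2
              exact absurd c2 (lt_irrefl _)
            · rw [hs'x x hxP] at c2 c3
              rw [hy] at c3
              linarith
          rw [hs'x y hyP] at c1 c2
          by_cases hxP : x = P
          · rw [hxP, hs'P] at c2 c3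
            rw [hxP] at c1
            by_cases hSle : S ≤ s y
            · rw [hφpos x y ⟨hxP, hSle⟩]
              refine Finset.mem_erase.mpr ⟨?_, mem_Cf.mpr ⟨hSV, hyV, hSle, c2, c3⟩⟩
              intro h
              have : S = P := congrArg Prod.fst h
              exact absurd this.symm (ne_of_lt hPS)
            · rw [hφneg x y (fun hh => hSle hh.2), hxP]
              push_neg at hSle
              refine Finset.mem_erase.mpr ⟨?_, ?_⟩
              · intro h
                exact hyX (congrArg Prod.snd h)
              · refine mem_Cf.mpr ⟨hPV, hyV, ?_, ?_, ?_⟩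
                · show P ≤ s y
                  exact c1
                · show s y < s P
                  rw [hPX]; linarith
                · show s P ≤ y
                  rw [hPX]; linarith
          · rw [hφneg x y (fun hh => hxP hh.1)]
            rw [hs'x x hxP] at c2 c3
            refine Finset.mem_erase.mpr ⟨?_, mem_Cf.mpr ⟨hxV, hyV, c1, c2, c3⟩⟩
            intro h
            exact hxP (congrArg Prod.fst h)
        · rintro ⟨x1, y1⟩ hq1 ⟨x2, y2⟩ hq2 h
          simp only [Finset.mem_coe] at hq1 hq2
          have hx1 : x1 ≠ S := ((hmemV' x1).mp (mem_Cf.mp hq1).1).1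
          have hx2 : x2 ≠ S := ((hmemV' x2).mp (mem_Cf.mp hq2).1).1
          by_cases hb1 : x1 = P ∧ S ≤ s y1 <;> by_cases hb2 : x2 = P ∧ S ≤ s y2
          · rw [hφpos x1 y1 hb1, hφpos x2 y2 hb2] at h
            simp only [Prod.mk.injEq] at h
            rw [hb1.1, hb2.1, h.2]
          · rw [hφpos x1 y1 hb1, hφneg x2 y2 hb2] at h
            simp only [Prod.mk.injEq] at h
            exact absurd h.1.symm hx2
          · rw [hφneg x1 y1 hb1, hφpos x2 y2 hb2] at h
            simp only [Prod.mk.injEq] at h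
            exact absurd h.1 hx1
          · rwa [hφneg x1 y1 hb1, hφneg x2 y2 hb2] at h
      have e1 := Finset.card_erase_add_one hSMf
      have e2 := Finset.card_erase_add_one hPXC
      have e3 := ih V' s' hcard' hm' hinj' hsur'
      omega
    · -- P = S : 2-cycle
      have hsXP : s X = P := by rw [hPS, hS]
      set V' := (V.erase X).erase P with hV'
      have hmemV' : ∀ x, x ∈ V' ↔ x ≠ P ∧ x ≠ X ∧ x ∈ V := by
        intro x
        simp [hV', Finset.mem_erase, and_assoc]
      have hcard' : V'.card ≤ N := by
        have h1 : V'.card ≤ (V.erase X).card := by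
          rw [hV']; exact Finset.card_erase_le
        have h2 := Finset.card_erase_add_one hXV
        omega
      have hm' : ∀ x ∈ V', s x ∈ V' := by
        intro x hx
        obtain ⟨hxP, hxX, hxV⟩ := (hmemV' x).mp hx
        refine (hmemV' (s x)).mpr ⟨?_, ?_, hm x hxV⟩
        · intro h
          exact hxX (hinj x hxV X hXV (h.trans hsXP.symm))
        · intro h
          exact hxP (hprerX x hxV h)
      have hinj' : ∀ x ∈ V', ∀ y ∈ V', s x = s y → x = y := by
        intro x hx y hy h
        obtain ⟨-, -, hxV⟩ := (hmemV' x).mp hx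
        obtain ⟨-, -, hyV⟩ := (hmemV' y).mp hy
        exact hinj x hxV y hyV h
      have hsur' : ∀ y ∈ V', ∃ x ∈ V', s x = y := by
        intro y hy
        obtain ⟨hyP, hyX, hyV⟩ := (hmemV' y).mp hy
        obtain ⟨x, hxV, hxy⟩ := hsur y hyV
        by_cases hxX2 : x = X
        · exact absurd (by rw [← hxy, hxX2, hsXP]) hyP
        · by_cases hxP2 : x = P
          · exact absurd (by rw [← hxy, hxP2, hPX]) hyX
          · exact ⟨x, (hmemV' x).mpr ⟨hxP2, hxX2, hxV⟩, hxy⟩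
      -- M side
      have hMle : ((Mf V s).erase P).card ≤ (Mf V' s).card := by
        apply Finset.card_le_card_of_injOn (fun x => x)
        · intro x hx
          obtain ⟨hxP, hxMf⟩ := Finset.mem_erase.mp hx
          obtain ⟨hxV, hx1, hx2⟩ := mem_Mf.mp hxMf
          have hxX : x ≠ X := by
            intro h
            rw [h, hsXP] at hx1
            linarith
          exact mem_Mf.mpr ⟨(hmemV' x).mpr ⟨hxP, hxX, hxV⟩, hx1, hx2⟩
        · intro x _ y _ h; exact h
      -- C side
      have hPXC : (P, X) ∈ Cf V s := by
        refine mem_Cf.mpr ⟨hPV, hXV, ?_, ?_, ?_⟩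
        · show P ≤ s X
          rw [hsXP]
        · show s X < s P
          rw [hsXP, hPX]; exact hP1
        · show s P ≤ X
          rw [hPX]
      have hCle : (Cf V' s).card ≤ ((Cf V s).erase (P, X)).card := by
        apply Finset.card_le_card
        intro q hq
        obtain ⟨hq1, hq2, hq3⟩ := mem_Cf.mp hq
        obtain ⟨hq1P, -, hq1V⟩ := (hmemV' q.1).mp hq1
        obtain ⟨-, -, hq2V⟩ := (hmemV' q.2).mp hq2
        refine Finset.mem_erase.mpr ⟨?_, mem_Cf.mpr ⟨hq1V, hq2V, hq3⟩⟩
        intro h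
        exact hq1P (by rw [h])
      have e1 := Finset.card_erase_add_one hPMf
      have e2 := Finset.card_erase_add_one hPXC
      have e3 := ih V' s hcard' hm' hinj' hsur'
      omega
    · -- S < P
      obtain ⟨Q, hQV, hQP⟩ := hsur P hPV
      have hPQ : P < Q := by
        rcases hD Q hQV with ⟨h1, h2⟩ | ⟨h1, h2⟩
        · rw [hQP, hPX] at h2
          linarith
        · rw [hQP] at h1
          exact h1
      have hXQ : X < Q := by
        obtain ⟨y2, hy2V, hy2Q⟩ := hsur Q hQV
        have hy2lt : y2 < Q := by
          rcases hD y2 hy2V with ⟨h1, -⟩ | ⟨-, h2⟩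
          · rw [hy2Q] at h1; exact h1
          · rw [hy2Q, hQP] at h2
            linarith
        have hy2Mf : y2 ∈ Mf V s := by
          refine mem_Mf.mpr ⟨hy2V, ?_, ?_⟩
          · rw [hy2Q]; exact hy2lt
          · rw [hy2Q, hQP]; exact hPQ
        have hQim : Q ∈ (Mf V s).image s := by
          rw [← hy2Q]; exact Finset.mem_image_of_mem s hy2Mf
        have hXle : X ≤ Q := Finset.min'_le _ _ hQim
        rcases lt_or_eq_of_le hXle with h | h
        · exact h
        · exfalso
          have : s X = s Q := by rw [← h]
          rw [hQP, ← hS] at this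
          exact absurd this (ne_of_lt hPS)
      set s' := fun x => if x = Q then S else s x with hs'
      set V' := (V.erase X).erase P with hV'
      have hmemV' : ∀ x, x ∈ V' ↔ x ≠ P ∧ x ≠ X ∧ x ∈ V := by
        intro x
        simp [hV', Finset.mem_erase, and_assoc]
      have hs'Q : s' Q = S := by simp [hs']
      have hs'x : ∀ x, x ≠ Q → s' x = s x := by intro x hx; simp [hs', hx]
      have hQV' : Q ∈ V' := (hmemV' Q).mpr ⟨ne_of_gt hPQ, ne_of_gt hXQ, hQV⟩
      have hSV' : S ∈ V' := (hmemV' S).mpr ⟨ne_of_lt hPS, hSneX, hSV⟩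
      have hcard' : V'.card ≤ N := by
        have h1 : V'.card ≤ (V.erase X).card := by
          rw [hV']; exact Finset.card_erase_le
        have h2 := Finset.card_erase_add_one hXV
        omega
      have hprerP : ∀ x ∈ V, s x = P → x = Q := fun x hx h =>
        hinj x hx Q hQV (h.trans hQP.symm)
      have hm' : ∀ x ∈ V', s' x ∈ V' := by
        intro x hx
        obtain ⟨hxP, hxX, hxV⟩ := (hmemV' x).mp hx
        by_cases hxQ : x = Q
        · rw [hxQ, hs'Q]; exact hSV'
        · rw [hs'x x hxQ]
          refine (hmemV' (s x)).mpr ⟨?_, ?_, hm x hxV⟩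
          · intro h; exact hxQ (hprerP x hxV h)
          · intro h; exact hxP (hprerX x hxV h)
      have hinj' : ∀ x ∈ V', ∀ y ∈ V', s' x = s' y → x = y := by
        intro x hx y hy h
        obtain ⟨hxP, hxX, hxV⟩ := (hmemV' x).mp hx
        obtain ⟨hyP, hyX, hyV⟩ := (hmemV' y).mp hy
        by_cases hxQ : x = Q <;> by_cases hyQ : y = Q
        · rw [hxQ, hyQ]
        · rw [hxQ, hs'Q, hs'x y hyQ] at h
          have : y = X := hprerS y hyV h.symm
          exact absurd this hyX
        · rw [hyQ, hs'Q, hs'x x hxQ] at h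
          have : x = X := hprerS x hxV h
          exact absurd this hxX
        · rw [hs'x x hxQ, hs'x y hyQ] at h
          exact hinj x hxV y hyV h
      have hsur' : ∀ y ∈ V', ∃ x ∈ V', s' x = y := by
        intro y hy
        obtain ⟨hyP, hyX, hyV⟩ := (hmemV' y).mp hy
        obtain ⟨x, hxV, hxy⟩ := hsur y hyV
        by_cases hxX2 : x = X
        · refine ⟨Q, hQV', ?_⟩
          rw [hs'Q, hS, ← hxX2]
          exact hxy
        · by_cases hxP2 : x = P
          · exact absurd (by rw [← hxy, hxP2, hPX]) hyX
          · by_cases hxQ2 : x = Q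
            · exact absurd (by rw [← hxy, hxQ2, hQP]) hyP
            · exact ⟨x, (hmemV' x).mpr ⟨hxP2, hxX2, hxV⟩, by rw [hs'x x hxQ2, hxy]⟩
      -- M side
      have hMle : ((Mf V s).erase P).card ≤ (Mf V' s').card := by
        apply Finset.card_le_card_of_injOn (fun x => x)
        · intro x hx
          obtain ⟨hxP, hxMf⟩ := Finset.mem_erase.mp hx
          obtain ⟨hxV, hx1, hx2⟩ := mem_Mf.mp hxMf
          have hxX : x ≠ X := by
            intro h
            rw [h, ← hS] at hx1
            linarith
          have hxQ : x ≠ Q := by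
            intro h
            rw [h, hQP] at hx1
            linarith
          refine mem_Mf.mpr ⟨(hmemV' x).mpr ⟨hxP, hxX, hxV⟩, ?_, ?_⟩
          · rw [hs'x x hxQ]; exact hx1
          · rw [hs'x x hxQ]
            by_cases hsxQeQ : s x = Q
            · rw [hsxQeQ, hs'Q]
              rw [hsxQeQ] at hx1
              linarith
            · rw [hs'x (s x) hsxQeQ]; exact hx2
        · intro x _ y _ h; exact h
      -- C side
      have hPQC : (P, Q) ∈ Cf V s := by
        refine mem_Cf.mpr ⟨hPV, hQV, ?_, ?_, ?_⟩
        · show P ≤ s Q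
          rw [hQP]
        · show s Q < s P
          rw [hQP, hPX]; exact hP1
        · show s P ≤ Q
          rw [hPX]; exact le_of_lt hXQ
      have hCle : (Cf V' s').card ≤ ((Cf V s).erase (P, Q)).card := by
        apply Finset.card_le_card
        intro q hq
        obtain ⟨hq1, hq2, c1, c2, c3⟩ := mem_Cf.mp hq
        obtain ⟨hx, hy⟩ : q = (q.1, q.2) := by simp
        obtain ⟨hq1P, hq1X, hq1V⟩ := (hmemV' q.1).mp hq1
        obtain ⟨hq2P, hq2X, hq2V⟩ := (hmemV' q.2).mp hq2
        have hxQ : q.1 ≠ Q := by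
          intro h
          by_cases hyQ : q.2 = Q
          · rw [h, hyQ, hs'Q] at c1
            linarith
          · rw [hs'x q.2 hyQ] at c1 c2
            rw [h, hs'Q] at c2
            rw [h] at c1
            linarith
        rw [hs'x q.1 hxQ] at c2 c3
        by_cases hyQ : q.2 = Q
        · rw [hyQ, hs'Q] at c1 c2
          refine Finset.mem_erase.mpr ⟨?_, ?_⟩
          · intro h
            exact hq1P (by rw [h])
          · refine mem_Cf.mpr ⟨hq1V, hq2V, ?_, ?_, ?_⟩
            · show q.1 ≤ s q.2
              rw [hyQ, hQP]
              linarith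
            · show s q.2 < s q.1
              rw [hyQ, hQP]
              have hlt : q.1 < s q.1 := by linarith
              have := (hKEY q.1 hq1V hlt).1
              linarith
            · show s q.1 ≤ q.2
              exact c3
        · rw [hs'x q.2 hyQ] at c1 c2
          refine Finset.mem_erase.mpr ⟨?_, mem_Cf.mpr ⟨hq1V, hq2V, c1, c2, c3⟩⟩
          intro h
          exact hyQ (by rw [h])
      have e1 := Finset.card_erase_add_one hPMf
      have e2 := Finset.card_erase_add_one hPQC
      have e3 := ih V' s' hcard' hm' hinj' hsur'
      omega

/-- In any cyclic tour on `n ≥ 2` distinct reals, the number of conflicting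
pairs is at least half the number of turning points: `|tp(T)| ≤ 2 · |cf(T)|`. -/
theorem stmt_7 (n : ℤ) (hn : 2 ≤ n) (v : ℤ → ℝ)
    (hper : ∀ i, v (i + n) = v i)
    (hinj : ∀ i j, 0 ≤ i → i < n → 0 ≤ j → j < n → v i = v j → i = j) :
    Nat.card {i : ℤ // 0 ≤ i ∧ i < n ∧ turning v i} ≤
      2 * Nat.card {p : ℤ × ℤ // 0 ≤ p.1 ∧ p.1 < n ∧ 0 ≤ p.2 ∧ p.2 < n ∧
            conflicting v p.1 p.2} := by
  classical
  have hn0 : (0:ℤ) < n := by omega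
  -- general periodicity
  have hperm : ∀ (m j : ℤ), v (j + m * n) = v j := by
    intro m
    induction m using Int.induction_on with
    | zero => intro j; simp
    | succ k ihk =>
      intro j
      have h3 : j + ((k : ℤ) + 1) * n = (j + (k : ℤ) * n) + n := by ring
      rw [h3, hper, ihk]
    | pred k ihk =>
      intro j
      have h2 := hper (j + (-(k : ℤ) - 1) * n)
      have h3 : j + (-(k : ℤ) - 1) * n + n = j + (-(k : ℤ)) * n := by ring
      rw [h3] at h2
      rw [← h2]
      exact ihk j
  have vmod : ∀ j : ℤ, v (j % n) = v j := by
    intro j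
    have h1 : j % n = j + (-(j / n)) * n := by
      rw [Int.emod_def]; ring
    rw [h1, hperm]
  have hmod0 : ∀ j : ℤ, 0 ≤ j % n := fun j => Int.emod_nonneg j (by omega)
  have hmod1 : ∀ j : ℤ, j % n < n := fun j => Int.emod_lt_of_pos j hn0
  have wid : ∀ i : ℤ, 0 ≤ i → i < n → i % n = i := fun i h0 h1 => Int.emod_eq_of_lt h0 h1
  have modadd : ∀ a b : ℤ, (a % n + b) % n = (a + b) % n := fun a b => Int.emod_add_emod a n b
  have vshift : ∀ a b : ℤ, v (a % n + b) = v (a + b) := by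
    intro a b
    rw [← vmod (a % n + b), modadd, vmod]
  have vinj' : ∀ i j : ℤ, v i = v j → i % n = j % n := by
    intro i j h
    apply hinj _ _ (hmod0 i) (hmod1 i) (hmod0 j) (hmod1 j)
    rw [vmod, vmod]; exact h
  have modsucc : ∀ i j : ℤ, (i + 1) % n = (j + 1) % n → i % n = j % n := by
    intro i j h
    have h1 : ((i+1) % n + (-1)) % n = ((j+1) % n + (-1)) % n := by rw [h]
    rw [modadd, modadd] at h1
    simpa using h1
  have stepinj : ∀ i j : ℤ, v (i + 1) = v (j + 1) → i % n = j % n :=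
    fun i j h => modsucc i j (vinj' _ _ h)
  -- the successor map
  set σ : ℝ → ℝ := fun x =>
    if h : ∃ i, (0 ≤ i ∧ i < n) ∧ v i = x then v (h.choose + 1) else x with hσ
  have hsigma : ∀ j : ℤ, σ (v j) = v (j + 1) := by
    intro j
    have hex : ∃ i, (0 ≤ i ∧ i < n) ∧ v i = v j :=
      ⟨j % n, ⟨hmod0 j, hmod1 j⟩, vmod j⟩
    rw [hσ]
    simp only [dif_pos hex]
    obtain ⟨⟨hc0, hc1⟩, hceq⟩ := hex.choose_spec
    have h1 : hex.choose % n = j % n := vinj' _ _ hceq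
    have h2 : hex.choose % n = hex.choose := wid _ hc0 hc1
    calc v (hex.choose + 1) = v (hex.choose % n + 1) := by rw [h2]
      _ = v (j % n + 1) := by rw [h1]
      _ = v (j + 1) := vshift j 1
  set V : Finset ℝ := (Finset.Ico (0:ℤ) n).image v with hV
  have hmemV : ∀ j : ℤ, v j ∈ V := by
    intro j
    rw [hV]
    exact Finset.mem_image.mpr ⟨j % n, Finset.mem_Ico.mpr ⟨hmod0 j, hmod1 j⟩, vmod j⟩
  have hrep : ∀ x ∈ V, ∃ j : ℤ, 0 ≤ j ∧ j < n ∧ v j = x := by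
    intro x hx
    rw [hV] at hx
    obtain ⟨j, hj, hjx⟩ := Finset.mem_image.mp hx
    obtain ⟨hj0, hj1⟩ := Finset.mem_Ico.mp hj
    exact ⟨j, hj0, hj1, hjx⟩
  have hmV : ∀ x ∈ V, σ x ∈ V := by
    intro x hx
    obtain ⟨j, -, -, rfl⟩ := hrep x hx
    rw [hsigma j]
    exact hmemV _
  have hinjV : ∀ x ∈ V, ∀ y ∈ V, σ x = σ y → x = y := by
    intro x hx y hy h
    obtain ⟨i, hi0, hi1, rfl⟩ := hrep x hx
    obtain ⟨j, hj0, hj1, rfl⟩ := hrep y hy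
    rw [hsigma i, hsigma j] at h
    have h1 := stepinj i j h
    rw [wid i hi0 hi1, wid j hj0 hj1] at h1
    rw [h1]
  have hsurV : ∀ y ∈ V, ∃ x ∈ V, σ x = y := by
    intro y hy
    obtain ⟨j, -, -, rfl⟩ := hrep y hy
    refine ⟨v (j - 1), hmemV _, ?_⟩
    rw [hsigma (j-1)]
    norm_num
  -- negated system
  set σ₂ : ℝ → ℝ := fun x => -σ (-x) with hσ₂
  set V₂ : Finset ℝ := V.image (fun x => -x) with hV₂
  have hmemV₂ : ∀ j : ℤ, -v j ∈ V₂ := by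
    intro j
    rw [hV₂]
    exact Finset.mem_image.mpr ⟨v j, hmemV j, rfl⟩
  have hnegV₂ : ∀ x ∈ V₂, -x ∈ V := by
    intro x hx
    rw [hV₂] at hx
    obtain ⟨u, hu, rfl⟩ := Finset.mem_image.mp hx
    simpa using hu
  have hsigma₂ : ∀ j : ℤ, σ₂ (-v j) = -v (j + 1) := by
    intro j
    rw [hσ₂]
    simp only [neg_neg]
    rw [hsigma j]
  have hrep₂ : ∀ x ∈ V₂, ∃ j : ℤ, 0 ≤ j ∧ j < n ∧ -v j = x := by
    intro x hx
    obtain ⟨j, h0, h1, hj⟩ := hrep (-x) (hnegV₂ x hx)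
    exact ⟨j, h0, h1, by rw [hj]; ring⟩
  have hmV₂ : ∀ x ∈ V₂, σ₂ x ∈ V₂ := by
    intro x hx
    obtain ⟨j, -, -, rfl⟩ := hrep₂ x hx
    rw [hsigma₂ j]
    exact hmemV₂ _
  have hinjV₂ : ∀ x ∈ V₂, ∀ y ∈ V₂, σ₂ x = σ₂ y → x = y := by
    intro x hx y hy h
    obtain ⟨i, hi0, hi1, rfl⟩ := hrep₂ x hx
    obtain ⟨j, hj0, hj1, rfl⟩ := hrep₂ y hy
    rw [hsigma₂ i, hsigma₂ j, neg_inj] at h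
    have h1 := stepinj i j h
    rw [wid i hi0 hi1, wid j hj0 hj1] at h1
    rw [h1]
  have hsurV₂ : ∀ y ∈ V₂, ∃ x ∈ V₂, σ₂ x = y := by
    intro y hy
    obtain ⟨j, -, -, rfl⟩ := hrep₂ y hy
    refine ⟨-v (j - 1), hmemV₂ _, ?_⟩
    rw [hsigma₂ (j-1)]
    norm_num
  -- index sets
  set MaxI : Finset ℤ := (Finset.Ico (0:ℤ) n).filter
    (fun i => v (i-1) < v i ∧ v (i+1) < v i) with hMaxI
  set MinI : Finset ℤ := (Finset.Ico (0:ℤ) n).filter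
    (fun i => v i < v (i-1) ∧ v i < v (i+1)) with hMinI
  set Tset : Finset ℤ := (Finset.Ico (0:ℤ) n).filter (fun i => turning v i) with hTset
  set Pset : Finset (ℤ × ℤ) := ((Finset.Ico (0:ℤ) n) ×ˢ (Finset.Ico (0:ℤ) n)).filter
    (fun p => conflicting v p.1 p.2) with hPset
  -- neighbor distinctness
  have hstepne : ∀ i : ℤ, 0 ≤ i → i < n → v i ≠ v (i + 1) := by
    intro i h0 h1 h
    have h2 := vinj' i (i+1) h
    rw [wid i h0 h1] at h2
    by_cases hc : i + 1 < n
    · rw [wid (i+1) (by omega) hc] at h2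
      omega
    · have : i + 1 = n := by omega
      rw [this, Int.emod_self] at h2
      omega
  have hne1 : ∀ i : ℤ, 0 ≤ i → i < n → v (i - 1) ≠ v i := by
    intro i h0 h1 h
    have h2 : v ((i-1) % n) = v ((i-1) % n + 1) := by
      rw [vmod, vshift]
      norm_num
      exact h
    exact hstepne ((i-1) % n) (hmod0 _) (hmod1 _) h2
  have hne2 : ∀ i : ℤ, 0 ≤ i → i < n → v (i + 1) ≠ v i := by
    intro i h0 h1 h
    exact hstepne i h0 h1 h.symm
  -- Tset ⊆ MaxI ∪ MinI
  have hTsub : Tset ⊆ MaxI ∪ MinI := by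
    intro i hi
    rw [hTset, Finset.mem_filter, Finset.mem_Ico] at hi
    obtain ⟨⟨h0, h1⟩, hT⟩ := hi
    obtain ⟨hTa, hTb⟩ := hT
    rw [Finset.mem_union, hMaxI, hMinI, Finset.mem_filter, Finset.mem_filter,
      Finset.mem_Ico]
    rcases lt_or_gt_of_ne (hne1 i h0 h1) with hl | hl
    · left
      refine ⟨⟨h0, h1⟩, hl, ?_⟩
      rcases lt_or_gt_of_ne (hne2 i h0 h1) with hm | hm
      · exact hm
      · exact absurd ⟨hl, hm⟩ hTa
    · right
      refine ⟨⟨h0, h1⟩, hl, ?_⟩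
      rcases lt_or_gt_of_ne (hne2 i h0 h1) with hm | hm
      · exact absurd ⟨hm, hl⟩ hTb
      · exact hm
  -- MaxI ↔ Mf V σ
  have hMaxcard : MaxI.card = (Mf V σ).card := by
    apply Finset.card_bij (fun i _ => v (i - 1))
    · intro i hi
      rw [hMaxI, Finset.mem_filter, Finset.mem_Ico] at hi
      obtain ⟨⟨h0, h1⟩, ha, hb⟩ := hi
      have e1 : σ (v (i-1)) = v i := by
        rw [hsigma (i-1)]
        norm_num
      refine mem_Mf.mpr ⟨hmemV _, ?_, ?_⟩
      · rw [e1]; exact ha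
      · rw [e1, hsigma i]; exact hb
    · intro i hi j hj h
      rw [hMaxI, Finset.mem_filter, Finset.mem_Ico] at hi hj
      have h1 := vinj' _ _ h
      have h2 : (i - 1 + 1) % n = (j - 1 + 1) % n := by
        rw [← modadd (i-1) 1, ← modadd (j-1) 1, h1]
      norm_num at h2
      rw [wid i hi.1.1 hi.1.2, wid j hj.1.1 hj.1.2] at h2
      exact h2
    · intro x hx
      obtain ⟨hxV, hx1, hx2⟩ := mem_Mf.mp hx
      obtain ⟨k, hk0, hk1, rfl⟩ := hrep x hxV
      rw [hsigma k] at hx1 hx2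
      rw [hsigma (k+1)] at hx2
      have e1 : v ((k+1) % n - 1) = v k := by
        have h := vshift (k+1) (-1)
        have ha : (k+1) % n + (-1) = (k+1) % n - 1 := by ring
        have hb : k + 1 + (-1) = k := by ring
        rw [ha, hb] at h
        exact h
      have e2 : v ((k+1) % n) = v (k+1) := vmod _
      have e3 : v ((k+1) % n + 1) = v (k+2) := by
        have h := vshift (k+1) 1
        have hb : k + 1 + 1 = k + 2 := by ring
        rw [hb] at h
        exact h
      refine ⟨(k + 1) % n, ?_, e1⟩
      rw [hMaxI, Finset.mem_filter, Finset.mem_Ico]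
      refine ⟨⟨hmod0 _, hmod1 _⟩, ?_, ?_⟩
      · rw [e1, e2]; exact hx1
      · rw [e3, e2]
        have hb : k + 1 + 1 = k + 2 := by ring
        rw [hb] at hx2
        exact hx2
  -- MinI ↔ Mf V₂ σ₂
  have hMincard : MinI.card = (Mf V₂ σ₂).card := by
    apply Finset.card_bij (fun i _ => -v (i - 1))
    · intro i hi
      rw [hMinI, Finset.mem_filter, Finset.mem_Ico] at hi
      obtain ⟨⟨h0, h1⟩, ha, hb⟩ := hi
      have e1 : σ₂ (-v (i-1)) = -v i := by
        rw [hsigma₂ (i-1)]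
        norm_num
      refine mem_Mf.mpr ⟨hmemV₂ _, ?_, ?_⟩
      · rw [e1]; simpa using ha
      · rw [e1, hsigma₂ i]; simpa using hb
    · intro i hi j hj h
      rw [hMinI, Finset.mem_filter, Finset.mem_Ico] at hi hj
      rw [neg_inj] at h
      have h1 := vinj' _ _ h
      have h2 : (i - 1 + 1) % n = (j - 1 + 1) % n := by
        rw [← modadd (i-1) 1, ← modadd (j-1) 1, h1]
      norm_num at h2
      rw [wid i hi.1.1 hi.1.2, wid j hj.1.1 hj.1.2] at h2
      exact h2
    · intro x hx
      obtain ⟨hxV, hx1, hx2⟩ := mem_Mf.mp hx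
      obtain ⟨k, hk0, hk1, rfl⟩ := hrep₂ x hxV
      rw [hsigma₂ k] at hx1 hx2
      rw [hsigma₂ (k+1)] at hx2
      have e1 : v ((k+1) % n - 1) = v k := by
        have h := vshift (k+1) (-1)
        have ha : (k+1) % n + (-1) = (k+1) % n - 1 := by ring
        have hb : k + 1 + (-1) = k := by ring
        rw [ha, hb] at h
        exact h
      have e2 : v ((k+1) % n) = v (k+1) := vmod _
      have e3 : v ((k+1) % n + 1) = v (k+2) := by
        have h := vshift (k+1) 1
        have hb : k + 1 + 1 = k + 2 := by ring
        rw [hb] at h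
        exact h
      refine ⟨(k + 1) % n, ?_, by rw [e1]⟩
      rw [hMinI, Finset.mem_filter, Finset.mem_Ico]
      refine ⟨⟨hmod0 _, hmod1 _⟩, ?_, ?_⟩
      · rw [e1, e2]
        simpa using hx1
      · rw [e2, e3]
        have h4 : k + 1 + 1 = k + 2 := by ring
        rw [h4] at hx2
        simpa using hx2
  -- Pset ↔ Cf V σ
  have hPcard : Pset.card = (Cf V σ).card := by
    apply Finset.card_bij (fun p _ => (v p.1, v p.2))
    · rintro ⟨i, j⟩ hp
      rw [hPset, Finset.mem_filter, Finset.mem_product, Finset.mem_Ico, Finset.mem_Ico] at hp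
      obtain ⟨⟨-, -⟩, hc1, hc2, hc3⟩ := hp
      refine mem_Cf.mpr ⟨hmemV _, hmemV _, ?_, ?_, ?_⟩
      · show v i ≤ σ (v j)
        rw [hsigma j]; exact hc1
      · show σ (v j) < σ (v i)
        rw [hsigma i, hsigma j]; exact hc2
      · show σ (v i) ≤ v j
        rw [hsigma i]; exact hc3
    · rintro ⟨i1, j1⟩ hp1 ⟨i2, j2⟩ hp2 h
      rw [hPset, Finset.mem_filter, Finset.mem_product, Finset.mem_Ico, Finset.mem_Ico] at hp1 hp2
      simp only [Prod.mk.injEq] at h ⊢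
      obtain ⟨ha, hb⟩ := h
      have e1 := vinj' _ _ ha
      have e2 := vinj' _ _ hb
      rw [wid i1 hp1.1.1.1 hp1.1.1.2, wid i2 hp2.1.1.1 hp2.1.1.2] at e1
      rw [wid j1 hp1.1.2.1 hp1.1.2.2, wid j2 hp2.1.2.1 hp2.1.2.2] at e2
      exact ⟨e1, e2⟩
    · rintro ⟨x, y⟩ hq
      obtain ⟨hxV, hyV, c1, c2, c3⟩ := mem_Cf.mp hq
      simp only at hxV hyV c1 c2 c3
      obtain ⟨i, hi0, hi1, rfl⟩ := hrep x hxV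
      obtain ⟨j, hj0, hj1, rfl⟩ := hrep y hyV
      rw [hsigma j] at c1
      rw [hsigma i, hsigma j] at c2
      rw [hsigma i] at c3
      refine ⟨(i, j), ?_, rfl⟩
      rw [hPset, Finset.mem_filter, Finset.mem_product, Finset.mem_Ico, Finset.mem_Ico]
      exact ⟨⟨⟨hi0, hi1⟩, ⟨hj0, hj1⟩⟩, c1, c2, c3⟩
  -- Cf V₂ σ₂ ↔ Cf V σ
  have hCcard : (Cf V₂ σ₂).card = (Cf V σ).card := by
    apply Finset.card_bij (fun q _ => (-q.2, -q.1))
    · rintro ⟨x, y⟩ hq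
      obtain ⟨hxV, hyV, c1, c2, c3⟩ := mem_Cf.mp hq
      simp only at hxV hyV c1 c2 c3
      have hx2 : σ₂ x = -σ (-x) := by rw [hσ₂]
      have hy2 : σ₂ y = -σ (-y) := by rw [hσ₂]
      rw [hy2] at c1
      rw [hx2, hy2] at c2
      rw [hx2] at c3
      refine mem_Cf.mpr ⟨hnegV₂ y hyV, hnegV₂ x hxV, ?_, ?_, ?_⟩
      · show -y ≤ σ (-x)
        linarith
      · show σ (-x) < σ (-y)
        linarith
      · show σ (-y) ≤ -x
        linarith
    · rintro ⟨x1, y1⟩ hq1 ⟨x2, y2⟩ hq2 h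
      simp only [Prod.mk.injEq, neg_inj] at h
      simp only [Prod.mk.injEq]
      exact ⟨h.2, h.1⟩
    · rintro ⟨u, w⟩ hq
      obtain ⟨huV, hwV, c1, c2, c3⟩ := mem_Cf.mp hq
      simp only at huV hwV c1 c2 c3
      refine ⟨(-w, -u), ?_, ?_⟩
      · have hw2 : -w ∈ V₂ := by
          rw [hV₂]; exact Finset.mem_image.mpr ⟨w, hwV, rfl⟩
        have hu2 : -u ∈ V₂ := by
          rw [hV₂]; exact Finset.mem_image.mpr ⟨u, huV, rfl⟩
        have e1 : σ₂ (-u) = -σ u := by rw [hσ₂]; norm_num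
        have e2 : σ₂ (-w) = -σ w := by rw [hσ₂]; norm_num
        refine mem_Cf.mpr ⟨hw2, hu2, ?_, ?_, ?_⟩
        · show -w ≤ σ₂ (-u)
          rw [e1]; linarith
        · show σ₂ (-u) < σ₂ (-w)
          rw [e1, e2]; linarith
        · show σ₂ (-w) ≤ -u
          rw [e2]; linarith
      · simp
  -- Nat.card conversions
  have hTcard : Nat.card {i : ℤ // 0 ≤ i ∧ i < n ∧ turning v i} = Tset.card := by
    have e : ∀ i : ℤ, (0 ≤ i ∧ i < n ∧ turning v i) ↔ i ∈ Tset := by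
      intro i
      rw [hTset, Finset.mem_filter, Finset.mem_Ico]
      tauto
    rw [Nat.card_congr (Equiv.subtypeEquivRight e), Nat.card_eq_finsetCard]
  have hPcard2 : Nat.card {p : ℤ × ℤ // 0 ≤ p.1 ∧ p.1 < n ∧ 0 ≤ p.2 ∧ p.2 < n ∧
      conflicting v p.1 p.2} = Pset.card := by
    have e : ∀ p : ℤ × ℤ, (0 ≤ p.1 ∧ p.1 < n ∧ 0 ≤ p.2 ∧ p.2 < n ∧
        conflicting v p.1 p.2) ↔ p ∈ Pset := by
      intro p
      rw [hPset, Finset.mem_filter, Finset.mem_product, Finset.mem_Ico, Finset.mem_Ico]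
      tauto
    rw [Nat.card_congr (Equiv.subtypeEquivRight e), Nat.card_eq_finsetCard]
  -- main inequalities
  have hmain1 : (Mf V σ).card ≤ (Cf V σ).card :=
    main_ineq V.card V σ le_rfl hmV hinjV hsurV
  have hmain2 : (Mf V₂ σ₂).card ≤ (Cf V₂ σ₂).card :=
    main_ineq V₂.card V₂ σ₂ le_rfl hmV₂ hinjV₂ hsurV₂
  -- conclude
  have hunion : Tset.card ≤ MaxI.card + MinI.card :=
    le_trans (Finset.card_le_card hTsub) (Finset.card_union_le _ _)
  rw [hTcard, hPcard2]
  omega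
end

section
/- Let T be a cyclic tour on distinct reals with contracted tour T̃. Then there is an injection from cf(T̃) to cf(T): for every conflicting pair of the contracted tour there is a corresponding conflicting pair of the original tour, and distinct contracted conflicting pairs map to distinct original conflicting pairs. In particular |cf(T̃)| ≤ |cf(T)|. -/
/-- Upward crossing of a level `c` along a finite stretch of a sequence. -/
lemma aux_cross_up (w : ℤ → ℝ) (c : ℝ) :
    ∀ N : ℕ, ∀ p : ℤ, w p ≤ c → c < w (p + N) →
      ∃ x, p ≤ x ∧ x < p + N ∧ w x ≤ c ∧ c < w (x + 1) := by
  intro N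
  induction N with
  | zero => intro p h1 h2; simp at h2; linarith
  | succ N ih =>
    intro p h1 h2
    by_cases h : c < w (p + 1)
    · exact ⟨p, le_refl _, by push_cast; omega, h1, h⟩
    · push_neg at h
      obtain ⟨x, hx1, hx2, hx3, hx4⟩ := ih (p + 1)
        h (by rw [show p + 1 + (N : ℤ) = p + ((N : ℤ) + 1) by ring]; exact_mod_cast h2)
      exact ⟨x, by omega, by push_cast at hx2 ⊢; omega, hx3, hx4⟩

/-- Downward crossing of a level `c` along a finite stretch of a sequence. -/
lemma aux_cross_down (w : ℤ → ℝ) (c : ℝ) (N : ℕ) (p : ℤ) (h1 : c ≤ w p)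
    (h2 : w (p + N) < c) : ∃ x, p ≤ x ∧ x < p + N ∧ c ≤ w x ∧ w (x + 1) < c := by
  obtain ⟨x, hx1, hx2, hx3, hx4⟩ := aux_cross_up (fun y => -(w y)) (-c) N p
    (by simpa) (by simpa)
  exact ⟨x, hx1, hx2, by simpa using hx3, by simpa using hx4⟩

/-- Chaining strict stepwise increase. -/
lemma aux_chain (w : ℤ → ℝ) (p q : ℤ) (h : ∀ x, p ≤ x → x < q → w x < w (x + 1)) :
    ∀ x y, p ≤ x → x < y → y ≤ q → w x < w y := by
  intro x y hx hxy hy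
  have key : ∀ z : ℤ, x + 1 ≤ z → z ≤ q → w x < w z := by
    intro z hz
    refine Int.le_induction (motive := fun z _ => z ≤ q → w x < w z) ?_ ?_ z hz
    · intro hq; exact h x hx (by omega)
    · intro y hy ih hq
      have h1 : w x < w y := ih (by omega)
      have h2 : w y < w (y + 1) := h y (by omega) (by omega)
      linarith
  exact key y (by omega) hy

/-- Two integers in a window of length `n` that agree modulo `n` are equal. -/
lemma aux_window (n a b L : ℤ) (hn : 0 < n) (ha : L ≤ a) (ha2 : a < L + n)
    (hb : L ≤ b) (hb2 : b < L + n) (h : a % n = b % n) : a = b := by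
  have hd : n ∣ a - b :=
    Int.dvd_of_emod_eq_zero (Int.emod_eq_emod_iff_emod_sub_eq_zero.mp h)
  obtain ⟨k, hk⟩ := hd
  rcases lt_trichotomy k 0 with hk0 | hk0 | hk0
  · exfalso; nlinarith
  · rw [hk0, mul_zero] at hk; omega
  · exfalso; nlinarith

/-- Let `T` be a cyclic tour on `n ≥ 2` distinct reals (an `n`-periodic
`v : ℤ → ℝ`) with exactly `2m` turning points, enumerated in cyclic order by a
strictly monotone `cIdx : ℤ → ℤ` with `cIdx (i + 2m) = cIdx i + n`; the
contracted tour `T̃` is `t = v ∘ cIdx`.  Then there is an injection from the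
conflicting pairs of `T̃` to those of `T`; in particular `|cf(T̃)| ≤ |cf(T)|`. -/
theorem stmt_10 (n : ℤ) (hn : 2 ≤ n) (m : ℕ) (hm : 1 ≤ m)
    (v : ℤ → ℝ) (hper : ∀ i, v (i + n) = v i)
    (hinj : ∀ i j, 0 ≤ i → i < n → 0 ≤ j → j < n → v i = v j → i = j)
    (cIdx : ℤ → ℤ) (hmono : StrictMono cIdx)
    (hcper : ∀ i, cIdx (i + 2 * (m : ℤ)) = cIdx i + n)
    (hcturn : ∀ i, turning v (cIdx i))
    (hall : ∀ j : ℤ, turning v j → ∃ i : ℤ, (j - cIdx i) % n = 0) :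
    (∃ f : {p : ℤ × ℤ // 0 ≤ p.1 ∧ p.1 < 2 * (m : ℤ) ∧ 0 ≤ p.2 ∧
              p.2 < 2 * (m : ℤ) ∧ conflicting (fun i => v (cIdx i)) p.1 p.2} →
          {p : ℤ × ℤ // 0 ≤ p.1 ∧ p.1 < n ∧ 0 ≤ p.2 ∧ p.2 < n ∧
              conflicting v p.1 p.2},
        Function.Injective f) ∧
      Nat.card {p : ℤ × ℤ // 0 ≤ p.1 ∧ p.1 < 2 * (m : ℤ) ∧ 0 ≤ p.2 ∧
          p.2 < 2 * (m : ℤ) ∧ conflicting (fun i => v (cIdx i)) p.1 p.2} ≤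
        Nat.card {p : ℤ × ℤ // 0 ≤ p.1 ∧ p.1 < n ∧ 0 ≤ p.2 ∧ p.2 < n ∧
            conflicting v p.1 p.2} := by
  -- periodicity with arbitrary integer multiples
  have vshift : ∀ (x k : ℤ), v (x + n * k) = v x := by
    intro x k
    induction k using Int.induction_on with
    | zero => simp
    | succ k ih =>
      rw [show x + n * ((k : ℤ) + 1) = (x + n * k) + n by ring, hper, ih]
    | pred k ih =>
      have h1 := hper (x + n * (-(k : ℤ) - 1))
      rw [show x + n * (-(k : ℤ) - 1) + n = x + n * (-(k : ℤ)) by ring] at h1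
      rw [← h1, ih]
  have hmod1 : ∀ a : ℤ, v (a % n) = v a := by
    intro a
    have h := vshift (a % n) (a / n)
    rw [Int.emod_add_mul_ediv a n] at h
    exact h.symm
  have hmod2 : ∀ a : ℤ, v (a % n + 1) = v (a + 1) := by
    intro a
    have h := vshift (a % n + 1) (a / n)
    have e : a % n + n * (a / n) = a := Int.emod_add_mul_ediv a n
    rw [show a % n + 1 + n * (a / n) = a + 1 by linarith] at h
    exact h.symm
  -- cIdx periodicity with arbitrary integer multiples
  have hcper' : ∀ (i k : ℤ), cIdx (i + 2 * (m : ℤ) * k) = cIdx i + n * k := by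
    intro i k
    induction k using Int.induction_on with
    | zero => simp
    | succ k ih =>
      rw [show i + 2 * (m : ℤ) * ((k : ℤ) + 1) = (i + 2 * (m : ℤ) * k) + 2 * (m : ℤ) by ring,
        hcper, ih]
      ring
    | pred k ih =>
      have h1 := hcper (i + 2 * (m : ℤ) * (-(k : ℤ) - 1))
      rw [show i + 2 * (m : ℤ) * (-(k : ℤ) - 1) + 2 * (m : ℤ)
          = i + 2 * (m : ℤ) * (-(k : ℤ)) by ring] at h1
      have e : (n : ℤ) * (-(k : ℤ) - 1) = n * (-(k : ℤ)) - n := by ring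
      rw [e]
      rw [ih] at h1
      linarith
  -- every turning point is of the form cIdx k
  have hturn_mem : ∀ x, turning v x → ∃ k, x = cIdx k := by
    intro x hx
    obtain ⟨i', hi'⟩ := hall x hx
    obtain ⟨k, hk⟩ := Int.dvd_of_emod_eq_zero hi'
    exact ⟨i' + 2 * (m : ℤ) * k, by rw [hcper' i' k]; omega⟩
  -- no turning points strictly between consecutive cIdx values
  have hnt : ∀ i x, cIdx i < x → x < cIdx (i + 1) → ¬ turning v x := by
    intro i x h1 h2 ht
    obtain ⟨k, hk⟩ := hturn_mem x ht
    subst hk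
    have e1 : i < k := hmono.lt_iff_lt.mp h1
    have e2 : k < i + 1 := hmono.lt_iff_lt.mp h2
    omega
  -- local monotonicity at non-turning points
  have hlocal : ∀ i x, cIdx i < x → x < cIdx (i + 1) →
      (v (x - 1) < v x ↔ v x < v (x + 1)) := by
    intro i x h1 h2
    have h := hnt i x h1 h2
    rcases not_and_or.mp h with hA | hB
    · obtain ⟨hA1, hA2⟩ := not_not.mp hA
      exact iff_of_true hA1 hA2
    · obtain ⟨hB1, hB2⟩ := not_not.mp hB
      exact iff_of_false (asymm hB2) (asymm hB1)
  -- distinctness of values in any window of length n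
  have hdist : ∀ x y : ℤ, x ≤ y → y < x + n → v x = v y → x = y := by
    intro x y h1 h2 he
    have hx1 := hmod1 x
    have hy1 := hmod1 y
    have hxy : x % n = y % n :=
      hinj (x % n) (y % n) (Int.emod_nonneg x (by omega)) (Int.emod_lt_of_pos x (by omega))
        (Int.emod_nonneg y (by omega)) (Int.emod_lt_of_pos y (by omega))
        (by rw [hx1, hy1, he])
    exact aux_window n x y x (by omega) (le_refl x) (by omega) h1 h2 hxy
  -- each segment lies in a window of length n
  have hsegwin : ∀ i : ℤ, cIdx (i + 1) ≤ cIdx i + n := by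
    intro i
    have h1 := hmono.monotone (show i + 1 ≤ i + 2 * (m : ℤ) by omega)
    have h2 := hcper i
    omega
  -- the stepwise direction is constant along a segment
  have hstepdir : ∀ i x, cIdx i ≤ x → x < cIdx (i + 1) →
      (v (cIdx i) < v (cIdx i + 1) ↔ v x < v (x + 1)) := by
    intro i x hx
    refine Int.le_induction
      (motive := fun x _ => x < cIdx (i + 1) → (v (cIdx i) < v (cIdx i + 1) ↔ v x < v (x + 1)))
      ?_ ?_ x hx
    · intro _; exact Iff.rfl
    · intro y hy ih hlt
      have h1 := ih (by omega)
      have h2 := hlocal i (y + 1) (by omega) hlt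
      rw [show y + 1 - 1 = y by ring] at h2
      exact h1.trans h2
  -- all steps go up if the first one does, etc.
  have hstep_dn_all : ∀ i, v (cIdx i + 1) < v (cIdx i) →
      ∀ x, cIdx i ≤ x → x < cIdx (i + 1) → v (x + 1) < v x := by
    intro i hdn x hx1 hx2
    have hiff := hstepdir i x hx1 hx2
    have hne2 : v x ≠ v (x + 1) := by
      intro he
      have := hdist x (x + 1) (by omega) (by omega) he
      omega
    have hnl : ¬ v x < v (x + 1) := fun hlt =>
      absurd hdn (not_lt.mpr (hiff.mpr hlt).le)
    exact lt_of_le_of_ne (not_lt.mp hnl) hne2.symm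
  have hfirst_ne : ∀ i : ℤ, v (cIdx i) ≠ v (cIdx i + 1) := by
    intro i he
    have := hdist (cIdx i) (cIdx i + 1) (by omega) (by omega) he
    omega
  -- strict monotonicity on segments, both directions
  have hseg_inc : ∀ i, v (cIdx i) < v (cIdx (i + 1)) →
      ∀ x y, cIdx i ≤ x → x < y → y ≤ cIdx (i + 1) → v x < v y := by
    intro i hd
    rcases lt_or_gt_of_ne (hfirst_ne i) with hup | hdn
    · exact fun x y hx hxy hy =>
        aux_chain v (cIdx i) (cIdx (i + 1))
          (fun z hz1 hz2 => (hstepdir i z hz1 hz2).mp hup) x y hx hxy hy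
    · exfalso
      have hchain := aux_chain (fun z => -(v z)) (cIdx i) (cIdx (i + 1))
        (fun z hz1 hz2 => by
          simpa using hstep_dn_all i hdn z hz1 hz2)
        (cIdx i) (cIdx (i + 1)) (le_refl _) (hmono (by omega)) (le_refl _)
      simp only [neg_lt_neg_iff] at hchain
      linarith
  have hseg_dec : ∀ i, v (cIdx (i + 1)) < v (cIdx i) →
      ∀ x y, cIdx i ≤ x → x < y → y ≤ cIdx (i + 1) → v y < v x := by
    intro i hd
    rcases lt_or_gt_of_ne (hfirst_ne i) with hup | hdn
    · exfalso
      have hchain := aux_chain v (cIdx i) (cIdx (i + 1))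
        (fun z hz1 hz2 => (hstepdir i z hz1 hz2).mp hup)
        (cIdx i) (cIdx (i + 1)) (le_refl _) (hmono (by omega)) (le_refl _)
      linarith
    · intro x y hx hxy hy
      have hchain := aux_chain (fun z => -(v z)) (cIdx i) (cIdx (i + 1))
        (fun z hz1 hz2 => by
          simpa using hstep_dn_all i hdn z hz1 hz2) x y hx hxy hy
      simpa using hchain
  -- the key combinatorial lemma: lifting a conflict of the contracted tour
  have key : ∀ i j : ℤ, conflicting (fun i => v (cIdx i)) i j →
      ∃ a b : ℤ, cIdx i ≤ a ∧ a < cIdx (i + 1) ∧ cIdx j ≤ b ∧ b < cIdx (j + 1) ∧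
        conflicting v a b := by
    intro i j hc
    simp only [conflicting] at hc
    obtain ⟨hc1, hc2, hc3⟩ := hc
    have hpq : cIdx i < cIdx (i + 1) := hmono (by omega)
    have hNa : cIdx i + ((cIdx (i + 1) - cIdx i).toNat : ℤ) = cIdx (i + 1) := by omega
    obtain ⟨a, ha1, ha2, ha3, ha4⟩ := aux_cross_up v (v (cIdx (j + 1)))
      (cIdx (i + 1) - cIdx i).toNat (cIdx i) hc1 (by rw [hNa]; exact hc2)
    rw [hNa] at ha2
    have hvq : v (cIdx i) < v (cIdx (i + 1)) := lt_of_le_of_lt hc1 hc2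
    have ha5 : v (a + 1) ≤ v (cIdx (i + 1)) := by
      rcases eq_or_lt_of_le (show a + 1 ≤ cIdx (i + 1) by omega) with he | hlt
      · rw [he]
      · exact (hseg_inc i hvq (a + 1) (cIdx (i + 1)) (by omega) hlt (le_refl _)).le
    have hpq' : cIdx j < cIdx (j + 1) := hmono (by omega)
    have hNb : cIdx j + ((cIdx (j + 1) - cIdx j).toNat : ℤ) = cIdx (j + 1) := by omega
    obtain ⟨b, hb1, hb2, hb3, hb4⟩ := aux_cross_down v (v (a + 1))
      (cIdx (j + 1) - cIdx j).toNat (cIdx j) (le_trans ha5 hc3) (by rw [hNb]; exact ha4)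
    rw [hNb] at hb2
    have hvq' : v (cIdx (j + 1)) < v (cIdx j) := lt_of_lt_of_le ha4 (le_trans ha5 hc3)
    have hb5 : v (cIdx (j + 1)) ≤ v (b + 1) := by
      rcases eq_or_lt_of_le (show b + 1 ≤ cIdx (j + 1) by omega) with he | hlt
      · rw [he]
      · exact (hseg_dec j hvq' (b + 1) (cIdx (j + 1)) (by omega) hlt (le_refl _)).le
    exact ⟨a, b, ha1, ha2, hb1, hb2, le_trans ha3 hb5, hb4, hb3⟩
  choose! A B hA1 hA2 hB1 hB2 hAB using key
  have h2m : cIdx (2 * (m : ℤ)) = cIdx 0 + n := by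
    have := hcper 0
    simpa using this
  -- the injection
  have hmem : ∀ x : {p : ℤ × ℤ // 0 ≤ p.1 ∧ p.1 < 2 * (m : ℤ) ∧ 0 ≤ p.2 ∧
      p.2 < 2 * (m : ℤ) ∧ conflicting (fun i => v (cIdx i)) p.1 p.2},
      0 ≤ A x.1.1 x.1.2 % n ∧ A x.1.1 x.1.2 % n < n ∧ 0 ≤ B x.1.1 x.1.2 % n ∧
        B x.1.1 x.1.2 % n < n ∧ conflicting v (A x.1.1 x.1.2 % n) (B x.1.1 x.1.2 % n) := by
    rintro ⟨⟨i, j⟩, hi0, hi1, hj0, hj1, hc⟩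
    refine ⟨Int.emod_nonneg _ (by omega), Int.emod_lt_of_pos _ (by omega),
      Int.emod_nonneg _ (by omega), Int.emod_lt_of_pos _ (by omega), ?_⟩
    have hconf := hAB i j hc
    simp only [conflicting] at hconf ⊢
    rw [hmod1, hmod2, hmod1, hmod2]
    exact hconf
  set f : {p : ℤ × ℤ // 0 ≤ p.1 ∧ p.1 < 2 * (m : ℤ) ∧ 0 ≤ p.2 ∧
      p.2 < 2 * (m : ℤ) ∧ conflicting (fun i => v (cIdx i)) p.1 p.2} →
      {p : ℤ × ℤ // 0 ≤ p.1 ∧ p.1 < n ∧ 0 ≤ p.2 ∧ p.2 < n ∧ conflicting v p.1 p.2} :=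
    fun x => ⟨(A x.1.1 x.1.2 % n, B x.1.1 x.1.2 % n), hmem x⟩ with hf
  have hwin : ∀ (i j : ℤ), 0 ≤ i → i < 2 * (m : ℤ) →
      conflicting (fun i => v (cIdx i)) i j →
      cIdx 0 ≤ A i j ∧ A i j < cIdx 0 + n := by
    intro i j hi0 hi1 hc
    have h1 := hA1 i j hc
    have h2 := hA2 i j hc
    have h3 := hmono.monotone (show (0 : ℤ) ≤ i by omega)
    have h4 := hmono.monotone (show i + 1 ≤ 2 * (m : ℤ) by omega)
    omega
  have hwinB : ∀ (i j : ℤ), 0 ≤ j → j < 2 * (m : ℤ) →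
      conflicting (fun i => v (cIdx i)) i j →
      cIdx 0 ≤ B i j ∧ B i j < cIdx 0 + n := by
    intro i j hj0 hj1 hc
    have h1 := hB1 i j hc
    have h2 := hB2 i j hc
    have h3 := hmono.monotone (show (0 : ℤ) ≤ j by omega)
    have h4 := hmono.monotone (show j + 1 ≤ 2 * (m : ℤ) by omega)
    omega
  have hfinj : Function.Injective f := by
    rintro ⟨⟨i1, j1⟩, hi10, hi11, hj10, hj11, hc1⟩ ⟨⟨i2, j2⟩, hi20, hi21, hj20, hj21, hc2⟩ hxy
    have hval := congrArg Subtype.val hxy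
    simp only [hf] at hval
    have hA : A i1 j1 % n = A i2 j2 % n := congrArg Prod.fst hval
    have hB : B i1 j1 % n = B i2 j2 % n := congrArg Prod.snd hval
    have hw1 := hwin i1 j1 hi10 hi11 hc1
    have hw2 := hwin i2 j2 hi20 hi21 hc2
    have hw3 := hwinB i1 j1 hj10 hj11 hc1
    have hw4 := hwinB i2 j2 hj20 hj21 hc2
    have hAe : A i1 j1 = A i2 j2 :=
      aux_window n _ _ (cIdx 0) (by omega) hw1.1 hw1.2 hw2.1 hw2.2 hA
    have hBe : B i1 j1 = B i2 j2 :=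
      aux_window n _ _ (cIdx 0) (by omega) hw3.1 hw3.2 hw4.1 hw4.2 hB
    have hii : i1 = i2 := by
      by_contra hne
      have ha11 := hA1 i1 j1 hc1
      have ha12 := hA2 i1 j1 hc1
      have ha21 := hA1 i2 j2 hc2
      have ha22 := hA2 i2 j2 hc2
      rcases lt_or_gt_of_ne hne with h | h
      · have := hmono.monotone (show i1 + 1 ≤ i2 by omega)
        omega
      · have := hmono.monotone (show i2 + 1 ≤ i1 by omega)
        omega
    have hjj : j1 = j2 := by
      by_contra hne
      have hb11 := hB1 i1 j1 hc1
      have hb12 := hB2 i1 j1 hc1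
      have hb21 := hB1 i2 j2 hc2
      have hb22 := hB2 i2 j2 hc2
      rcases lt_or_gt_of_ne hne with h | h
      · have := hmono.monotone (show j1 + 1 ≤ j2 by omega)
        omega
      · have := hmono.monotone (show j2 + 1 ≤ j1 by omega)
        omega
    subst hii; subst hjj
    rfl
  -- finiteness of the codomain
  have hfin : Finite {p : ℤ × ℤ // 0 ≤ p.1 ∧ p.1 < n ∧ 0 ≤ p.2 ∧ p.2 < n ∧
      conflicting v p.1 p.2} := by
    have hS : ({p : ℤ × ℤ | 0 ≤ p.1 ∧ p.1 < n ∧ 0 ≤ p.2 ∧ p.2 < n ∧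
        conflicting v p.1 p.2}).Finite := by
      apply Set.Finite.subset ((Set.finite_Ico (0 : ℤ) n).prod (Set.finite_Ico (0 : ℤ) n))
      rintro ⟨x, y⟩ ⟨h1, h2, h3, h4, h5⟩
      exact ⟨⟨h1, h2⟩, ⟨h3, h4⟩⟩
    exact hS.to_subtype
  exact ⟨⟨f, hfinj⟩, Nat.card_le_card_of_injective f hfinj⟩
end
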